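/- Let α be irrational with denominator sequence (q_n) and suppose 2q_{n_1} < q_{n_1+1} for an increasing sequence of even numbers (n_k). Then for every m ∈ ℕ: 2∑_{s=1}^m ‖q_{n_s}α‖ < 4/5 < 1. -/

import Mathlib

/-- `nrm r` is the distance from the real number `r` to the nearest integer. -/
noncomputable def nrm (r : ℝ) : ℝ := ‖((r : ℝ) : AddCircle (1:ℝ))‖

lemma nrm_le_abs_sub_int (x : ℝ) (z : ℤ) : nrm x ≤ |x - z| := by
  have h : nrm x = |x - round x| := by
    rw [nrm, AddCircle.norm_eq]
    simp
  rw [h]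
  exact round_le x z

open GenContFract in
lemma not_terminatedAt_of_irrational {α : ℝ} (hα : Irrational α) (k : ℕ) :
    ¬(GenContFract.of α).TerminatedAt k := by
  intro hk
  obtain ⟨r, hr⟩ := (terminates_iff_rat α).mp ⟨k, hk⟩
  exact hα ⟨r, hr.symm⟩

/- STATEMENT 5: For irrational α with denominators (q_n) and an increasing sequence of even
numbers (n_k) with 2q_{n_1} < q_{n_1+1}, one has for every m: 2∑_{s=1}^m ‖q_{n_s}α‖ < 4/5 < 1. -/
theorem stmt5 (α : ℝ) (hα : Irrational α) (q : ℕ → ℕ)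
    (hq : ∀ m, ((q m : ℝ)) = (GenContFract.of α).dens m)
    (n : ℕ → ℕ) (hmono : StrictMono n) (heven : ∀ k, Even (n k))
    (h1 : 2 * q (n 1) < q (n 1 + 1)) :
    ∀ m : ℕ, 2 * (∑ s ∈ Finset.Icc 1 m, nrm ((q (n s) : ℝ) * α)) < 4 / 5 ∧
      (4 : ℝ) / 5 < 1 := by
  classical
  set g := GenContFract.of α with hg
  have hnt : ∀ k, ¬g.TerminatedAt k := not_terminatedAt_of_irrational hα
  have hsget : ∀ k, ∃ gp, g.s.get? k = some gp := by
    intro k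
    exact Option.ne_none_iff_exists'.1 (hnt k)
  set D : ℕ → ℝ := fun k => g.dens k with hD
  -- fib lower bound for D
  have hfib : ∀ k, ((Nat.fib (k + 1) : ℝ)) ≤ D k := by
    intro k
    apply GenContFract.succ_nth_fib_le_of_nth_den
    rcases k with _ | k
    · exact Or.inl rfl
    · exact Or.inr (hnt k)
  have hD1 : ∀ k, (1 : ℝ) ≤ D k := by
    intro k
    refine le_trans ?_ (hfib k)
    have : 1 ≤ Nat.fib (k + 1) := Nat.fib_pos.mpr (Nat.succ_pos k)
    exact_mod_cast this
  have hDpos : ∀ k, (0 : ℝ) < D k := fun k => lt_of_lt_of_le one_pos (hD1 k)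
  have hmonoD : Monotone D := monotone_nat_of_le_succ (fun k => GenContFract.of_den_mono)
  -- recurrence inequality
  have hrec : ∀ k, D k + D (k + 1) ≤ D (k + 2) := by
    intro k
    obtain ⟨gp, hs⟩ := hsget (k + 1)
    have ha : gp.a = 1 := GenContFract.of_partNum_eq_one (GenContFract.partNum_eq_s_a hs)
    have hb : (1 : ℝ) ≤ gp.b :=
      GenContFract.of_one_le_get?_partDen (GenContFract.partDen_eq_s_b hs)
    have := GenContFract.dens_recurrence hs rfl rfl
    rw [ha] at this
    have hDk1 := hDpos (k + 1)
    rw [show D (k + 2) = g.dens (k + 2) from rfl, this]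
    nlinarith
  -- numerators are integers
  have hint : ∀ k, (∃ z : ℤ, g.nums k = (z : ℝ)) ∧ ∃ z : ℤ, g.nums (k + 1) = (z : ℝ) := by
    intro k
    induction k with
    | zero =>
      constructor
      · exact ⟨⌊α⌋, by rw [GenContFract.zeroth_num_eq_h, GenContFract.of_h_eq_floor]⟩
      · obtain ⟨gp, hs⟩ := hsget 0
        have ha : gp.a = 1 := GenContFract.of_partNum_eq_one (GenContFract.partNum_eq_s_a hs)
        obtain ⟨z, hz⟩ :=
          GenContFract.exists_int_eq_of_partDen (GenContFract.partDen_eq_s_b hs)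
        refine ⟨z * ⌊α⌋ + 1, ?_⟩
        rw [GenContFract.first_num_eq hs, ha, GenContFract.of_h_eq_floor, hz]
        push_cast
        ring
    | succ k ih =>
      refine ⟨ih.2, ?_⟩
      obtain ⟨z0, hz0⟩ := ih.1
      obtain ⟨z1, hz1⟩ := ih.2
      obtain ⟨gp, hs⟩ := hsget (k + 1)
      have ha : gp.a = 1 := GenContFract.of_partNum_eq_one (GenContFract.partNum_eq_s_a hs)
      obtain ⟨z, hz⟩ :=
        GenContFract.exists_int_eq_of_partDen (GenContFract.partDen_eq_s_b hs)
      refine ⟨z * z1 + z0, ?_⟩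
      rw [GenContFract.nums_recurrence hs hz0 hz1, ha, hz]
      push_cast
      ring
  -- nrm bound
  have hnrm : ∀ k, nrm ((q k : ℝ) * α) ≤ 1 / D (k + 1) := by
    intro k
    obtain ⟨z, hz⟩ := (hint k).1
    have h1' : nrm ((q k : ℝ) * α) ≤ |(q k : ℝ) * α - z| := nrm_le_abs_sub_int _ z
    have hconv : g.nums k = g.convs k * D k := by
      rw [GenContFract.conv_eq_num_div_den]
      field_simp [(hDpos k).ne']
      exact (mul_div_cancel_right₀ _ (hDpos k).ne').symm
    have heq : (q k : ℝ) * α - z = D k * (α - g.convs k) := by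
      rw [← hz, hq k, hconv]; ring
    have habs : |(q k : ℝ) * α - z| = D k * |α - g.convs k| := by
      rw [heq, abs_mul, abs_of_pos (hDpos k)]
    have happ : |α - g.convs k| ≤ 1 / (D k * D (k + 1)) :=
      GenContFract.abs_sub_convs_le (hnt k)
    calc nrm ((q k : ℝ) * α) ≤ D k * |α - g.convs k| := by rw [← habs]; exact h1'
      _ ≤ D k * (1 / (D k * D (k + 1))) := by
          exact mul_le_mul_of_nonneg_left happ (hDpos k).le
      _ = 1 / D (k + 1) := by field_simp [(hDpos k).ne', (hDpos (k+1)).ne']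
  -- n gaps
  have hgap : ∀ s, n s + 2 ≤ n (s + 1) := by
    intro s
    have h : n s < n (s + 1) := hmono (by omega)
    obtain ⟨a, hasa⟩ := heven s
    obtain ⟨b, hb⟩ := heven (s + 1)
    omega
  have hn1 : 2 ≤ n 1 := by
    have h : n 0 < n 1 := hmono (by omega)
    obtain ⟨b, hb⟩ := heven 1
    omega
  -- base: D (n 1 + 1) ≥ 5
  have hq2 : 2 ≤ q (n 1) := by
    have h2 : (2 : ℝ) ≤ D (n 1) := by
      refine le_trans ?_ (hfib (n 1))
      have : Nat.fib 3 ≤ Nat.fib (n 1 + 1) := Nat.fib_mono (by omega)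
      have h3 : Nat.fib 3 = 2 := rfl
      exact_mod_cast h3 ▸ this
    have h2' : (2 : ℝ) ≤ (q (n 1) : ℝ) := by rw [hq]; exact h2
    exact_mod_cast h2'
  have hbase : (5 : ℝ) ≤ D (n 1 + 1) := by
    have h5 : 5 ≤ q (n 1 + 1) := by omega
    show (5 : ℝ) ≤ g.dens (n 1 + 1)
    rw [← hq]
    exact_mod_cast h5
  -- geometric growth
  have hgeo : ∀ s : ℕ, (5 : ℝ) * 2 ^ s ≤ D (n (s + 1) + 1) := by
    intro s
    induction s with
    | zero => simpa using hbase
    | succ s ih =>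
      have hstep : 2 * D (n (s + 1) + 1) ≤ D (n (s + 2) + 1) := by
        have h3 : D (n (s + 1) + 1) + D (n (s + 1) + 2) ≤ D (n (s + 1) + 3) := by
          exact hrec (n (s + 1) + 1)
        have h4 : D (n (s + 1) + 1) ≤ D (n (s + 1) + 2) := hmonoD (by omega)
        have hg2 : n (s + 1) + 2 ≤ n (s + 2) := hgap (s + 1)
        have h5 : D (n (s + 1) + 3) ≤ D (n (s + 2) + 1) := hmonoD (by omega)
        linarith
      calc (5 : ℝ) * 2 ^ (s + 1) = 2 * (5 * 2 ^ s) := by ring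
        _ ≤ 2 * D (n (s + 1) + 1) := by linarith
        _ ≤ D (n (s + 2) + 1) := hstep
  -- bound each term
  have hterm : ∀ s : ℕ, 1 ≤ s → nrm ((q (n s) : ℝ) * α) ≤ (1 / 5) * (1 / 2) ^ (s - 1) := by
    intro s hs
    obtain ⟨t, rfl⟩ := Nat.exists_eq_add_of_le hs
    have h5 : (5 : ℝ) * 2 ^ t ≤ D (n (1 + t) + 1) := by
      have := hgeo t
      rwa [Nat.add_comm t 1] at this
    have hpos : (0 : ℝ) < 5 * 2 ^ t := by positivity
    calc nrm ((q (n (1 + t)) : ℝ) * α) ≤ 1 / D (n (1 + t) + 1) := hnrm _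
      _ ≤ 1 / (5 * 2 ^ t) := by
          apply one_div_le_one_div_of_le hpos h5
      _ = (1 / 5) * (1 / 2) ^ ((1 + t) - 1) := by
          simp only [Nat.add_sub_cancel_left]
          rw [div_pow, one_pow]
          field_simp
  intro m
  refine ⟨?_, by norm_num⟩
  have hsum : (∑ s ∈ Finset.Icc 1 m, nrm ((q (n s) : ℝ) * α)) ≤
      ∑ s ∈ Finset.Icc 1 m, (1 / 5 : ℝ) * (1 / 2) ^ (s - 1) := by
    apply Finset.sum_le_sum
    intro s hs
    exact hterm s (Finset.mem_Icc.mp hs).1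
  have hval : (∑ s ∈ Finset.Icc 1 m, (1 / 5 : ℝ) * (1 / 2) ^ (s - 1)) =
      (1 / 5) * ∑ j ∈ Finset.range m, (1 / 2 : ℝ) ^ j := by
    rw [← Finset.Ico_add_one_right_eq_Icc, Finset.sum_Ico_eq_sum_range, Finset.mul_sum]
    simp
  have hgsum : (∑ j ∈ Finset.range m, (1 / 2 : ℝ) ^ j) < 2 := by
    have h := geom_sum_eq (show (1/2 : ℝ) ≠ 1 by norm_num) m
    rw [h]
    have h2 : (0 : ℝ) < (1 / 2) ^ m := by positivity
    rw [div_lt_iff_of_neg (by norm_num : (1/2 : ℝ) - 1 < 0)]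
    linarith
  have : (∑ s ∈ Finset.Icc 1 m, nrm ((q (n s) : ℝ) * α)) < 2 / 5 := by
    calc (∑ s ∈ Finset.Icc 1 m, nrm ((q (n s) : ℝ) * α))
        ≤ (1 / 5) * ∑ j ∈ Finset.range m, (1 / 2 : ℝ) ^ j := by rw [← hval]; exact hsum
      _ < (1 / 5) * 2 := by linarith
      _ = 2 / 5 := by norm_num
  linarith
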